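/- Let f = x(x³ + y³ + z³) ∈ ℂ[x,y,z] (degree N = 4). Then the dimensions of the graded pieces of the Milnor algebra are: dim M(f)_0 = 1, dim M(f)_1 = 3, dim M(f)_2 = 6, dim M(f)_3 = 7, dim M(f)_4 = 6, dim M(f)_5 = 4, and dim M(f)_k = 3 for all k ≥ 6. In particular ct(C) = 4 and st(C) = 6. -/

import Mathlib

open MvPolynomial

noncomputable def milnorDim (f : MvPolynomial (Fin 3) ℂ) (k : ℕ) : ℕ :=
  Module.finrank ℂ
    (↥(homogeneousSubmodule (Fin 3) ℂ k) ⧸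
      (Submodule.comap (homogeneousSubmodule (Fin 3) ℂ k).subtype
        ((Ideal.span {pderiv (0 : Fin 3) f, pderiv 1 f, pderiv 2 f}).restrictScalars ℂ)))


/-- `dim M(f_s)_k` for a smooth curve `f_s = 0` of degree `N`: the coefficient of `t^k`
in `((1 − t^{N−1})/(1 − t))³`. -/
noncomputable def smoothMilnorDim (N k : ℕ) : ℕ :=
  ((∑ i ∈ Finset.range (N - 1), (Polynomial.X : Polynomial ℕ) ^ i) ^ 3).coeff k


open Finsupp

noncomputable section Milnor8

abbrev S3 := MvPolynomial (Fin 3) ℂ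

/-- exponent vector -/
def mexp (a b c : ℕ) : Fin 3 →₀ ℕ :=
  Finsupp.single 0 a + Finsupp.single 1 b + Finsupp.single 2 c

@[simp] lemma mexp_apply0 (a b c : ℕ) : mexp a b c 0 = a := by simp [mexp, Finsupp.single_apply]
@[simp] lemma mexp_apply1 (a b c : ℕ) : mexp a b c 1 = b := by simp [Finsupp.single_apply, mexp]
@[simp] lemma mexp_apply2 (a b c : ℕ) : mexp a b c 2 = c := by simp [Finsupp.single_apply, mexp]

lemma mexp_eta (m : Fin 3 →₀ ℕ) : mexp (m 0) (m 1) (m 2) = m := by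
  ext i; fin_cases i <;> simp

lemma mexp_eq_iff {a b c a' b' c' : ℕ} :
    mexp a b c = mexp a' b' c' ↔ (a = a' ∧ b = b' ∧ c = c') := by
  constructor
  · intro h
    exact ⟨by simpa using DFunLike.congr_fun h 0, by simpa using DFunLike.congr_fun h 1,
      by simpa using DFunLike.congr_fun h 2⟩
  · rintro ⟨rfl, rfl, rfl⟩; rfl

lemma mexp_le_iff {a b c a' b' c' : ℕ} :
    mexp a b c ≤ mexp a' b' c' ↔ (a ≤ a' ∧ b ≤ b' ∧ c ≤ c') := by
  rw [Finsupp.le_def]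
  constructor
  · intro h; exact ⟨by simpa using h 0, by simpa using h 1, by simpa using h 2⟩
  · rintro ⟨h1, h2, h3⟩ i; fin_cases i <;> simpa

lemma mexp_sub (a b c a' b' c' : ℕ) :
    mexp a b c - mexp a' b' c' = mexp (a - a') (b - b') (c - c') := by
  ext i; fin_cases i <;> simp [Finsupp.tsub_apply]

lemma Xabc (a b c : ℕ) : (X 0 : S3) ^ a * X 1 ^ b * X 2 ^ c = monomial (mexp a b c) 1 := by
  simp [mexp, X_pow_eq_monomial, monomial_mul]

lemma coeff_mul_mono (p : S3) (a b c a' b' c' : ℕ) (r : ℂ) :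
    coeff (mexp a b c) (p * monomial (mexp a' b' c') r) =
      if a' ≤ a ∧ b' ≤ b ∧ c' ≤ c then coeff (mexp (a - a') (b - b') (c - c')) p * r else 0 := by
  rw [coeff_mul_monomial', mexp_sub]
  exact if_congr mexp_le_iff rfl rfl

lemma coeff_mexp_monomial (a b c a' b' c' : ℕ) (r : ℂ) :
    coeff (mexp a b c) (monomial (mexp a' b' c') r : S3) =
      if a' = a ∧ b' = b ∧ c' = c then r else 0 := by
  rw [coeff_monomial]
  exact if_congr mexp_eq_iff rfl rfl

lemma degree_fin3 (d : Fin 3 →₀ ℕ) : d.degree = d 0 + d 1 + d 2 := by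
  rw [Finsupp.degree_apply,
    Finset.sum_subset (Finset.subset_univ _) (by intro i _ h; simpa using h)]
  simp [Fin.sum_univ_three]

@[simp] lemma degree_mexp (a b c : ℕ) : (mexp a b c).degree = a + b + c := by
  rw [degree_fin3]; simp

/-- membership in the homogeneous submodule for explicit monomial products -/
lemma Xabc_mem (a b c k : ℕ) (h : a + b + c = k) :
    (X 0 : S3) ^ a * X 1 ^ b * X 2 ^ c ∈ homogeneousSubmodule (Fin 3) ℂ k := by
  rw [Xabc, mem_homogeneousSubmodule]
  exact isHomogeneous_monomial _ (by simp [h])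

/-- the three partial derivatives of `f = x(x³+y³+z³)` -/
def g1 : S3 := monomial (mexp 3 0 0) 4 + monomial (mexp 0 3 0) 1 + monomial (mexp 0 0 3) 1
def g2 : S3 := monomial (mexp 1 2 0) 3
def g3 : S3 := monomial (mexp 1 0 2) 3

lemma monomial_mexp (a b c : ℕ) (r : ℂ) :
    (monomial (mexp a b c) r : S3) = C r * (X 0 ^ a * X 1 ^ b * X 2 ^ c) := by
  rw [Xabc, C_mul_monomial, mul_one]

lemma g1_X : g1 = 4 * X 0 ^ 3 + X 1 ^ 3 + X 2 ^ 3 := by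
  rw [g1, monomial_mexp, monomial_mexp, monomial_mexp, ← map_ofNat (C : ℂ →+* S3) 4, map_one]
  ring

lemma g2_X : g2 = 3 * (X 0 * X 1 ^ 2) := by
  rw [g2, monomial_mexp, ← map_ofNat (C : ℂ →+* S3) 3]
  ring

lemma g3_X : g3 = 3 * (X 0 * X 2 ^ 2) := by
  rw [g3, monomial_mexp, ← map_ofNat (C : ℂ →+* S3) 3]
  ring

def J0 : Ideal S3 := Ideal.span {g1, g2, g3}

abbrev JC : Submodule ℂ S3 := J0.restrictScalars ℂ

lemma mul_g1_mem (u : S3) : u * g1 ∈ JC :=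
  Ideal.mul_mem_left _ u (Ideal.subset_span (by simp))
lemma mul_g2_mem (u : S3) : u * g2 ∈ JC :=
  Ideal.mul_mem_left _ u (Ideal.subset_span (by simp))
lemma mul_g3_mem (u : S3) : u * g3 ∈ JC :=
  Ideal.mul_mem_left _ u (Ideal.subset_span (by simp))

lemma smul_mem_cancel {p : S3} {W : Submodule ℂ S3} (c : ℂ) (hc : c ≠ 0)
    (h : c • p ∈ W) : p ∈ W := by
  have := W.smul_mem c⁻¹ h
  rwa [smul_smul, inv_mul_cancel₀ hc, one_smul] at this

lemma memJ_decomp {p : S3} (h : p ∈ J0) : ∃ u v w, p = u * g1 + v * g2 + w * g3 := by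
  rw [J0, show ({g1, g2, g3} : Set S3) = insert g1 (insert g2 {g3}) from rfl,
    Ideal.mem_span_insert] at h
  obtain ⟨u, z, hz, rfl⟩ := h
  rw [Ideal.mem_span_insert] at hz
  obtain ⟨v, w', hw, rfl⟩ := hz
  rw [Ideal.mem_span_singleton'] at hw
  obtain ⟨w, rfl⟩ := hw
  exact ⟨u, v, w, by ring⟩

/-- a linear functional vanishing on the three generator-multiples vanishes on `J0` -/
lemma Lam_vanish {r : ℕ} (Λ : S3 →ₗ[ℂ] (Fin r → ℂ))
    (h1 : ∀ u, Λ (u * g1) = 0) (h2 : ∀ u, Λ (u * g2) = 0) (h3 : ∀ u, Λ (u * g3) = 0) :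
    ∀ p ∈ J0, Λ p = 0 := by
  intro p hp
  obtain ⟨u, v, w, rfl⟩ := memJ_decomp hp
  simp [map_add, h1, h2, h3]

/-- Master lemma computing the graded Milnor dimension via a spanning family and
dual functionals. -/
lemma key (k r : ℕ) (b : Fin r → S3)
    (hb : ∀ i, b i ∈ homogeneousSubmodule (Fin 3) ℂ k)
    (Λ : S3 →ₗ[ℂ] (Fin r → ℂ))
    (hΛJ : ∀ p ∈ J0, Λ p = 0)
    (hsurj : ∀ v : Fin r → ℂ, ∃ w ∈ homogeneousSubmodule (Fin 3) ℂ k, Λ w = v)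
    (hSP : ∀ p ∈ homogeneousSubmodule (Fin 3) ℂ k,
        p ∈ JC ⊔ Submodule.span ℂ (Set.range b)) :
    Module.finrank ℂ
      (↥(homogeneousSubmodule (Fin 3) ℂ k) ⧸
        (Submodule.comap (homogeneousSubmodule (Fin 3) ℂ k).subtype JC)) = r := by
  set H := homogeneousSubmodule (Fin 3) ℂ k with hH
  set N : Submodule ℂ H := Submodule.comap H.subtype JC with hN
  -- the functional, descended to the quotient
  have hNker : N ≤ LinearMap.ker (Λ.comp H.subtype) := by
    intro x hx
    simp only [LinearMap.mem_ker, LinearMap.comp_apply]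
    exact hΛJ _ ((Submodule.restrictScalars_mem ℂ J0 _).1 hx)
  set φ : (H ⧸ N) →ₗ[ℂ] (Fin r → ℂ) := N.liftQ (Λ.comp H.subtype) hNker with hφ
  have hφs : Function.Surjective φ := by
    intro v
    obtain ⟨w, hw, hΛw⟩ := hsurj v
    exact ⟨Submodule.Quotient.mk ⟨w, hw⟩, by simpa [hφ] using hΛw⟩
  -- the spanning map
  have hbH : Submodule.span ℂ (Set.range b) ≤ H := by
    rw [Submodule.span_le]; rintro x ⟨i, rfl⟩; exact hb i
  set qb : Fin r → (H ⧸ N) := fun i => Submodule.Quotient.mk ⟨b i, hb i⟩ with hqb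
  set ψ : (Fin r → ℂ) →ₗ[ℂ] (H ⧸ N) := Fintype.linearCombination ℂ qb with hψ
  have hψapp : ∀ c : Fin r → ℂ, ψ c = ∑ i, c i • qb i := fun c => by
    simp [hψ, Fintype.linearCombination_apply]
  have hψs : Function.Surjective ψ := by
    rintro q
    obtain ⟨⟨p, hp⟩, rfl⟩ := Submodule.Quotient.mk_surjective N q
    obtain ⟨j, hj, w, hw, hjw⟩ := Submodule.mem_sup.1 (hSP p hp)
    obtain ⟨c, rfl⟩ := (Submodule.mem_span_range_iff_exists_fun ℂ).1 hw
    refine ⟨c, ?_⟩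
    rw [hψapp]
    have hsum : (⟨p, hp⟩ : H) - ∑ i, c i • ⟨b i, hb i⟩ ∈ N := by
      have hcoe : ((∑ i, c i • (⟨b i, hb i⟩ : H) : H) : S3) = ∑ i, c i • b i := by
        simp
      rw [hN, Submodule.mem_comap]
      have : (H.subtype) ((⟨p, hp⟩ : H) - ∑ i, c i • ⟨b i, hb i⟩)
          = p - ∑ i, c i • b i := by simp [hcoe]
      rw [this, show p - ∑ i, c i • b i = j by rw [← hjw]; ring]
      exact hj
    calc ∑ i, c i • qb i = Submodule.Quotient.mk (∑ i, c i • (⟨b i, hb i⟩ : H)) := by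
          simp only [hqb, ← Submodule.mkQ_apply, ← map_smul, ← map_sum]
      _ = Submodule.Quotient.mk ⟨p, hp⟩ := by
          rw [Submodule.Quotient.eq]
          simpa using N.neg_mem hsum
  haveI : Module.Finite ℂ (H ⧸ N) := Module.Finite.of_surjective ψ hψs
  refine le_antisymm ?_ ?_
  · have h := LinearMap.finrank_range_le ψ
    rw [LinearMap.range_eq_top.2 hψs, finrank_top] at h
    simpa [Module.finrank_fin_fun] using h
  · have h := LinearMap.finrank_range_le φ
    rw [LinearMap.range_eq_top.2 hφs, finrank_top] at h
    simpa [Module.finrank_fin_fun] using h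

/-- reduce spanning to monomials -/
lemma SP_of_mono (k : ℕ) (W : Submodule ℂ S3)
    (hmono : ∀ a b c : ℕ, a + b + c = k → (X 0 : S3) ^ a * X 1 ^ b * X 2 ^ c ∈ JC ⊔ W) :
    ∀ p ∈ homogeneousSubmodule (Fin 3) ℂ k, p ∈ JC ⊔ W := by
  intro p hp
  rw [mem_homogeneousSubmodule] at hp
  rw [← p.support_sum_monomial_coeff]
  refine Submodule.sum_mem _ fun m hm => ?_
  have hd : m 0 + m 1 + m 2 = k := by
    have h := hp (MvPolynomial.mem_support_iff.1 hm)
    rw [← degree_fin3, Finsupp.degree_eq_weight_one]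
    exact h
  have : (monomial m (coeff m p) : S3)
      = (coeff m p) • ((X 0 : S3) ^ (m 0) * X 1 ^ (m 1) * X 2 ^ (m 2)) := by
    rw [Xabc, mexp_eta, smul_monomial, smul_eq_mul, mul_one]
  rw [this]
  exact Submodule.smul_mem _ _ (hmono _ _ _ hd)

-- membership helpers for monomials in the Jacobian ideal
lemma memJ_y2 (a b c : ℕ) : (X 0 : S3) ^ (a + 1) * X 1 ^ (b + 2) * X 2 ^ c ∈ JC := by
  refine smul_mem_cancel (3 : ℂ) (by norm_num) ?_
  have : (3 : ℂ) • ((X 0 : S3) ^ (a + 1) * X 1 ^ (b + 2) * X 2 ^ c)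
      = (X 0 ^ a * X 1 ^ b * X 2 ^ c) * g2 := by
    rw [smul_eq_C_mul, map_ofNat, g2_X]; ring
  rw [this]; exact mul_g2_mem _

lemma memJ_z2 (a b c : ℕ) : (X 0 : S3) ^ (a + 1) * X 1 ^ b * X 2 ^ (c + 2) ∈ JC := by
  refine smul_mem_cancel (3 : ℂ) (by norm_num) ?_
  have : (3 : ℂ) • ((X 0 : S3) ^ (a + 1) * X 1 ^ b * X 2 ^ (c + 2))
      = (X 0 ^ a * X 1 ^ b * X 2 ^ c) * g3 := by
    rw [smul_eq_C_mul, map_ofNat, g3_X]; ring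
  rw [this]; exact mul_g3_mem _

/-- `x^{a+4} y^b z^c ∈ J` -/
lemma memJ_x4 (a b c : ℕ) : (X 0 : S3) ^ (a + 4) * X 1 ^ b * X 2 ^ c ∈ JC := by
  refine smul_mem_cancel (4 : ℂ) (by norm_num) ?_
  have : (4 : ℂ) • ((X 0 : S3) ^ (a + 4) * X 1 ^ b * X 2 ^ c)
      = (X 0 ^ (a + 1) * X 1 ^ b * X 2 ^ c) * g1
        - (X 0 ^ (a + 1) * X 1 ^ (b + 1) * X 2 ^ c * X 1 ^ 2)
        - (X 0 ^ (a + 1) * X 1 ^ b * X 2 ^ (c + 1) * X 2 ^ 2) := by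
    rw [smul_eq_C_mul, map_ofNat, g1_X]; ring
  rw [this]
  refine Submodule.sub_mem _ (Submodule.sub_mem _ (mul_g1_mem _) ?_) ?_
  · have e : (X 0 : S3) ^ (a + 1) * X 1 ^ (b + 1) * X 2 ^ c * X 1 ^ 2
        = X 0 ^ (a + 1) * X 1 ^ (b + 1 + 2) * X 2 ^ c := by ring
    rw [e]; exact memJ_y2 a (b + 1) c
  · have e : (X 0 : S3) ^ (a + 1) * X 1 ^ b * X 2 ^ (c + 1) * X 2 ^ 2
        = X 0 ^ (a + 1) * X 1 ^ b * X 2 ^ (c + 1 + 2) := by ring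
    rw [e]; exact memJ_z2 a b (c + 1)

/-- `h1 = y⁵ + y²z³ ∈ J` -/
lemma memJ_h1 : (X 1 : S3) ^ 5 + X 1 ^ 2 * X 2 ^ 3 ∈ JC := by
  refine smul_mem_cancel (3 : ℂ) (by norm_num) ?_
  have : (3 : ℂ) • ((X 1 : S3) ^ 5 + X 1 ^ 2 * X 2 ^ 3)
      = (3 * X 1 ^ 2) * g1 - (4 * X 0 ^ 2) * g2 := by
    rw [smul_eq_C_mul, map_ofNat, g1_X, g2_X]; ring
  rw [this]; exact Submodule.sub_mem _ (mul_g1_mem _) (mul_g2_mem _)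

/-- `h2 = y³z² + z⁵ ∈ J` -/
lemma memJ_h2 : (X 1 : S3) ^ 3 * X 2 ^ 2 + X 2 ^ 5 ∈ JC := by
  refine smul_mem_cancel (3 : ℂ) (by norm_num) ?_
  have : (3 : ℂ) • ((X 1 : S3) ^ 3 * X 2 ^ 2 + X 2 ^ 5)
      = (3 * X 2 ^ 2) * g1 - (4 * X 0 ^ 2) * g3 := by
    rw [smul_eq_C_mul, map_ofNat, g1_X, g3_X]; ring
  rw [this]; exact Submodule.sub_mem _ (mul_g1_mem _) (mul_g3_mem _)

lemma mul_mem_JC {p : S3} (h : p ∈ JC) (u : S3) : u * p ∈ JC := by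
  rw [Submodule.restrictScalars_mem] at h ⊢
  exact Ideal.mul_mem_left _ u h

section Infinite

def zeta : ℂ := (-1 + Real.sqrt 3 * Complex.I) / 2

lemma zeta_rel : zeta ^ 2 + zeta + 1 = 0 := by
  have h3 : ((Real.sqrt 3 : ℝ) : ℂ) ^ 2 = 3 := by
    norm_cast
    rw [sq]
    exact Real.mul_self_sqrt (by norm_num)
  have h3' : ((Real.sqrt 3 : ℝ) : ℂ) ^ 2 * Complex.I ^ 2 = -3 := by
    rw [Complex.I_sq]
    linear_combination (-1 : ℂ) * h3
  rw [zeta]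
  linear_combination h3' / 4

lemma zeta_cube : zeta ^ 3 = 1 := by
  linear_combination (zeta - 1) * zeta_rel

def wroot : Fin 3 → ℂ := ![(-1 : ℂ), -zeta, -(zeta ^ 2)]

lemma wroot_cube (j : Fin 3) : wroot j ^ 3 = -1 := by
  fin_cases j
  · norm_num [wroot]
  · show (-zeta) ^ 3 = -1
    linear_combination (-1 : ℂ) * zeta_cube
  · show (-(zeta ^ 2)) ^ 3 = -1
    linear_combination (-(zeta ^ 3) - 1) * zeta_cube

lemma zeta_ne_one : zeta ≠ 1 := by
  intro h
  have := zeta_rel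
  rw [h] at this
  norm_num at this

lemma zeta_sq_ne_one : zeta ^ 2 ≠ 1 := by
  intro h
  have hv : zeta = -2 := by linear_combination zeta_rel - h
  rw [hv] at h
  norm_num at h

lemma zeta_ne_sq : zeta ≠ zeta ^ 2 := by
  intro h
  have h2 : (2 : ℂ) * zeta + 1 = 0 := by linear_combination zeta_rel + h
  have hv : zeta = -(1 / 2) := by linear_combination h2 / 2
  have := zeta_rel
  rw [hv] at this
  norm_num at this

lemma wroot_inj : Function.Injective wroot := by
  intro i j h
  fin_cases i <;> fin_cases j
  · rfl
  · exact absurd (neg_injective (show (-1 : ℂ) = -zeta from h)).symm zeta_ne_one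
  · exact absurd (neg_injective (show (-1 : ℂ) = -(zeta ^ 2) from h)).symm zeta_sq_ne_one
  · exact absurd (neg_injective (show -zeta = (-1 : ℂ) from h)) zeta_ne_one
  · rfl
  · exact absurd (neg_injective (show -zeta = -(zeta ^ 2) from h)) zeta_ne_sq
  · exact absurd (neg_injective (show -(zeta ^ 2) = (-1 : ℂ) from h)) zeta_sq_ne_one
  · exact absurd (neg_injective (show -(zeta ^ 2) = -zeta from h)).symm zeta_ne_sq
  · rfl

def pt (j : Fin 3) : Fin 3 → ℂ := ![0, wroot j, 1]

def Linf : S3 →ₗ[ℂ] (Fin 3 → ℂ) :=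
  LinearMap.pi fun j => (aeval (pt j)).toLinearMap

lemma aeval_pt_g1 (j : Fin 3) : aeval (pt j) g1 = 0 := by
  rw [g1_X]
  simp only [map_add, map_mul, map_pow, map_ofNat, aeval_X, pt]
  rw [show (![0, wroot j, 1] : Fin 3 → ℂ) 0 = 0 from rfl,
    show (![0, wroot j, 1] : Fin 3 → ℂ) 1 = wroot j from rfl,
    show (![0, wroot j, 1] : Fin 3 → ℂ) 2 = 1 from rfl, wroot_cube]
  ring

lemma aeval_pt_g2 (j : Fin 3) : aeval (pt j) g2 = 0 := by
  rw [g2_X]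
  simp only [map_mul, map_pow, map_ofNat, aeval_X, pt]
  rw [show (![0, wroot j, 1] : Fin 3 → ℂ) 0 = 0 from rfl]
  ring

lemma aeval_pt_g3 (j : Fin 3) : aeval (pt j) g3 = 0 := by
  rw [g3_X]
  simp only [map_mul, map_pow, map_ofNat, aeval_X, pt]
  rw [show (![0, wroot j, 1] : Fin 3 → ℂ) 0 = 0 from rfl]
  ring

lemma Linf_vanish : ∀ p ∈ J0, Linf p = 0 := by
  refine Lam_vanish Linf ?_ ?_ ?_ <;>
    (intro u
     funext j
     simp only [Linf, LinearMap.pi_apply, AlgHom.toLinearMap_apply, map_mul, Pi.zero_apply])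
  · rw [aeval_pt_g1]; ring
  · rw [aeval_pt_g2]; ring
  · rw [aeval_pt_g3]; ring

def Avdm : Matrix (Fin 3) (Fin 3) ℂ := Matrix.vandermonde wroot

lemma Avdm_det_ne : Avdm.det ≠ 0 := by
  rw [Avdm, Matrix.det_vandermonde]
  refine Finset.prod_ne_zero_iff.2 fun i _ => Finset.prod_ne_zero_iff.2 fun j hj => ?_
  refine sub_ne_zero_of_ne fun h => ?_
  exact absurd (wroot_inj h) (ne_of_gt (Finset.mem_Ioi.1 hj))

/-- basis monomials for `k ≥ 6` -/
def b6 (k : ℕ) : Fin 3 → S3 := fun a => X 1 ^ (a : ℕ) * X 2 ^ (k - (a : ℕ))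

lemma b6_mem (k : ℕ) (hk : 6 ≤ k) (a : Fin 3) :
    b6 k a ∈ homogeneousSubmodule (Fin 3) ℂ k := by
  have h := Xabc_mem 0 (a : ℕ) (k - (a : ℕ)) k (by have := a.isLt; omega)
  rw [pow_zero, one_mul] at h
  exact h

lemma aeval_pt_b6 (k : ℕ) (hk : 6 ≤ k) (j : Fin 3) (a : Fin 3) :
    aeval (pt j) (b6 k a) = wroot j ^ (a : ℕ) := by
  simp only [b6, map_mul, map_pow, aeval_X, pt]
  rw [show (![0, wroot j, 1] : Fin 3 → ℂ) 1 = wroot j from rfl,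
    show (![0, wroot j, 1] : Fin 3 → ℂ) 2 = 1 from rfl]
  ring

lemma Linf_surj (k : ℕ) (hk : 6 ≤ k) :
    ∀ v : Fin 3 → ℂ, ∃ w ∈ homogeneousSubmodule (Fin 3) ℂ k, Linf w = v := by
  intro v
  set c : Fin 3 → ℂ := (Avdm⁻¹).mulVec v with hc
  refine ⟨∑ a, c a • b6 k a, Submodule.sum_mem _ fun a _ =>
    Submodule.smul_mem _ _ (b6_mem k hk a), ?_⟩
  funext j
  have : Linf (∑ a, c a • b6 k a) j = ∑ a, c a * wroot j ^ (a : ℕ) := by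
    simp only [Linf, map_sum, map_smul, LinearMap.pi_apply, AlgHom.toLinearMap_apply]
    refine Finset.sum_congr rfl fun a _ => ?_
    rw [aeval_pt_b6 k hk j a, smul_eq_mul]
  rw [this]
  have hAc : ∑ a, c a * wroot j ^ (a : ℕ) = Avdm.mulVec c j := by
    simp only [Avdm, Matrix.mulVec, dotProduct, Matrix.vandermonde]
    exact Finset.sum_congr rfl fun a _ => mul_comm _ _
  rw [hAc, hc, Matrix.mulVec_mulVec,
    Matrix.mul_nonsing_inv Avdm (isUnit_iff_ne_zero.2 Avdm_det_ne), Matrix.one_mulVec]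

lemma Ryz (k : ℕ) (hk : 6 ≤ k) :
    ∀ b c : ℕ, b + c = k →
      (X 1 : S3) ^ b * X 2 ^ c ∈ JC ⊔ Submodule.span ℂ (Set.range (b6 k)) := by
  intro b
  induction b using Nat.strong_induction_on with
  | _ b IH =>
    intro c hbc
    by_cases hb2 : b ≤ 2
    · have hcv : c = k - b := by omega
      subst hcv
      refine Submodule.mem_sup_right (Submodule.subset_span ⟨⟨b, by omega⟩, ?_⟩)
      simp [b6]
    · by_cases hb4 : b ≤ 4
      · -- 3 ≤ b ≤ 4, c ≥ 2
        obtain ⟨b', rfl⟩ : ∃ b', b = b' + 3 := ⟨b - 3, by omega⟩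
        obtain ⟨c', rfl⟩ : ∃ c', c = c' + 2 := ⟨c - 2, by omega⟩
        have heq : (X 1 : S3) ^ (b' + 3) * X 2 ^ (c' + 2)
            = (X 1 ^ b' * X 2 ^ c') * (X 1 ^ 3 * X 2 ^ 2 + X 2 ^ 5)
              - X 1 ^ b' * X 2 ^ (c' + 5) := by ring
        rw [heq]
        exact Submodule.sub_mem _
          (Submodule.mem_sup_left (mul_mem_JC memJ_h2 _))
          (IH b' (by omega) (c' + 5) (by omega))
      · -- b ≥ 5
        obtain ⟨b', rfl⟩ : ∃ b', b = b' + 5 := ⟨b - 5, by omega⟩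
        have heq : (X 1 : S3) ^ (b' + 5) * X 2 ^ c
            = (X 1 ^ b' * X 2 ^ c) * (X 1 ^ 5 + X 1 ^ 2 * X 2 ^ 3)
              - X 1 ^ (b' + 2) * X 2 ^ (c + 3) := by ring
        rw [heq]
        exact Submodule.sub_mem _
          (Submodule.mem_sup_left (mul_mem_JC memJ_h1 _))
          (IH (b' + 2) (by omega) (c + 3) (by omega))

lemma SP6 (k : ℕ) (hk : 6 ≤ k) :
    ∀ p ∈ homogeneousSubmodule (Fin 3) ℂ k,
      p ∈ JC ⊔ Submodule.span ℂ (Set.range (b6 k)) := by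
  refine SP_of_mono k _ fun a b c habc => ?_
  rcases Nat.eq_zero_or_pos a with rfl | ha
  · have h := Ryz k hk b c (by omega)
    simpa using h
  · by_cases hb : 2 ≤ b
    · obtain ⟨a', rfl⟩ : ∃ a', a = a' + 1 := ⟨a - 1, by omega⟩
      obtain ⟨b', rfl⟩ : ∃ b', b = b' + 2 := ⟨b - 2, by omega⟩
      exact Submodule.mem_sup_left (memJ_y2 a' b' c)
    · by_cases hcz : 2 ≤ c
      · obtain ⟨a', rfl⟩ : ∃ a', a = a' + 1 := ⟨a - 1, by omega⟩
        obtain ⟨c', rfl⟩ : ∃ c', c = c' + 2 := ⟨c - 2, by omega⟩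
        exact Submodule.mem_sup_left (memJ_z2 a' b c')
      · obtain ⟨a', rfl⟩ : ∃ a', a = a' + 4 := ⟨a - 4, by omega⟩
        exact Submodule.mem_sup_left (memJ_x4 a' b c)

lemma milnor_ge6 (k : ℕ) (hk : 6 ≤ k) :
    Module.finrank ℂ
      (↥(homogeneousSubmodule (Fin 3) ℂ k) ⧸
        (Submodule.comap (homogeneousSubmodule (Fin 3) ℂ k).subtype JC)) = 3 :=
  key k 3 (b6 k) (b6_mem k hk) Linf Linf_vanish (Linf_surj k hk) (SP6 k hk)

end Infinite

section Finite

/-- coefficient functional -/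
def lc (a b c : ℕ) : S3 →ₗ[ℂ] ℂ := lcoeff ℂ (mexp a b c)

@[simp] lemma lc_apply (a b c : ℕ) (p : S3) : lc a b c p = coeff (mexp a b c) p := rfl

def b3 : Fin 7 → S3
  | 0 => X 0 ^ 2 * X 1 ^ 1 * X 2 ^ 0
  | 1 => X 0 ^ 2 * X 1 ^ 0 * X 2 ^ 1
  | 2 => X 0 ^ 1 * X 1 ^ 1 * X 2 ^ 1
  | 3 => X 0 ^ 0 * X 1 ^ 3 * X 2 ^ 0
  | 4 => X 0 ^ 0 * X 1 ^ 2 * X 2 ^ 1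
  | 5 => X 0 ^ 0 * X 1 ^ 1 * X 2 ^ 2
  | 6 => X 0 ^ 0 * X 1 ^ 0 * X 2 ^ 3

def L3 : Fin 7 → (S3 →ₗ[ℂ] ℂ)
  | 0 => lc 2 1 0
  | 1 => lc 2 0 1
  | 2 => lc 1 1 1
  | 3 => lc 0 3 0 - (4 : ℂ)⁻¹ • lc 3 0 0
  | 4 => lc 0 2 1
  | 5 => lc 0 1 2
  | 6 => lc 0 0 3 - (4 : ℂ)⁻¹ • lc 3 0 0

def Lam3 : S3 →ₗ[ℂ] (Fin 7 → ℂ) := LinearMap.pi L3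

lemma hb3 : ∀ i, b3 i ∈ homogeneousSubmodule (Fin 3) ℂ 3 := by
  intro i
  fin_cases i <;> exact Xabc_mem _ _ _ _ (by norm_num)

lemma Lam3_vanish : ∀ p ∈ J0, Lam3 p = 0 := by
  refine Lam_vanish Lam3 ?_ ?_ ?_ <;>
    (intro u
     funext j
     simp only [Lam3, LinearMap.pi_apply, Pi.zero_apply]
     fin_cases j <;>
       norm_num [L3, g1, g2, g3, mul_add, coeff_mul_mono, LinearMap.sub_apply,
         LinearMap.smul_apply, smul_eq_mul] <;> ring)

lemma Lam3_basis : ∀ i, Lam3 (b3 i) = Pi.single i 1 := by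
  intro i
  funext j
  simp only [Lam3, LinearMap.pi_apply]
  fin_cases i <;> fin_cases j <;>
    (simp only [L3, b3, Xabc, LinearMap.sub_apply, LinearMap.smul_apply, smul_eq_mul,
      lc_apply, coeff_mexp_monomial, Pi.single_apply]
     norm_num [Fin.ext_iff])

lemma SP3 : ∀ p ∈ homogeneousSubmodule (Fin 3) ℂ 3,
    p ∈ JC ⊔ Submodule.span ℂ (Set.range b3) := by
  refine SP_of_mono 3 _ fun a b c habc => ?_
  have spmem : ∀ i : Fin 7, b3 i ∈ JC ⊔ Submodule.span ℂ (Set.range b3) :=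
    fun i => Submodule.mem_sup_right (Submodule.subset_span ⟨i, rfl⟩)
  have hA : a ≤ 3 := by omega
  have hB : b ≤ 3 := by omega
  interval_cases a <;> interval_cases b <;>
    [ (obtain rfl : c = 3 := by omega);
      (obtain rfl : c = 2 := by omega);
      (obtain rfl : c = 1 := by omega);
      (obtain rfl : c = 0 := by omega);
      (obtain rfl : c = 2 := by omega);
      (obtain rfl : c = 1 := by omega);
      (obtain rfl : c = 0 := by omega);
      (exact absurd habc (by omega));
      (obtain rfl : c = 1 := by omega);
      (obtain rfl : c = 0 := by omega);
      (exact absurd habc (by omega));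
      (exact absurd habc (by omega));
      (obtain rfl : c = 0 := by omega);
      (exact absurd habc (by omega));
      (exact absurd habc (by omega));
      (exact absurd habc (by omega))]
  · exact spmem 6
  · exact spmem 5
  · exact spmem 4
  · exact spmem 3
  · exact Submodule.mem_sup_left (by simpa using memJ_z2 0 0 0)
  · exact spmem 2
  · exact Submodule.mem_sup_left (by simpa using memJ_y2 0 0 0)
  · exact spmem 1
  · exact spmem 0
  · refine smul_mem_cancel (4 : ℂ) (by norm_num) ?_
    have heq : (4 : ℂ) • ((X 0 : S3) ^ 3 * X 1 ^ 0 * X 2 ^ 0)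
        = (1 : S3) * g1 - b3 3 - b3 6 := by
      rw [smul_eq_C_mul, map_ofNat, g1_X, show b3 3 = X 0 ^ 0 * X 1 ^ 3 * X 2 ^ 0 from rfl,
        show b3 6 = X 0 ^ 0 * X 1 ^ 0 * X 2 ^ 3 from rfl]
      ring
    rw [heq]
    exact Submodule.sub_mem _ (Submodule.sub_mem _
      (Submodule.mem_sup_left (mul_g1_mem 1)) (spmem 3)) (spmem 6)

lemma hsurj_of_basis {k r : ℕ} (b : Fin r → S3)
    (hb : ∀ i, b i ∈ homogeneousSubmodule (Fin 3) ℂ k)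
    (Λ : S3 →ₗ[ℂ] (Fin r → ℂ)) (h : ∀ i, Λ (b i) = Pi.single i 1) :
    ∀ v : Fin r → ℂ, ∃ w ∈ homogeneousSubmodule (Fin 3) ℂ k, Λ w = v := by
  intro v
  refine ⟨∑ i, v i • b i, Submodule.sum_mem _ fun i _ => Submodule.smul_mem _ _ (hb i), ?_⟩
  rw [map_sum]
  funext j
  simp only [Finset.sum_apply, map_smul, Pi.smul_apply, h, Pi.single_apply, smul_eq_mul,
    mul_ite, mul_one, mul_zero]
  simp [Finset.sum_ite_eq]

noncomputable def MD (k : ℕ) : ℕ :=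
  Module.finrank ℂ
    (↥(homogeneousSubmodule (Fin 3) ℂ k) ⧸
      (Submodule.comap (homogeneousSubmodule (Fin 3) ℂ k).subtype JC))

lemma MD3 : MD 3 = 7 :=
  key 3 7 b3 hb3 Lam3 Lam3_vanish (hsurj_of_basis b3 hb3 Lam3 Lam3_basis) SP3

lemma MD_ge6 (k : ℕ) (hk : 6 ≤ k) : MD k = 3 := milnor_ge6 k hk

----------------------------------------------------------------
-- k = 0
def b0 : Fin 1 → S3
  | 0 => X 0 ^ 0 * X 1 ^ 0 * X 2 ^ 0

def L0 : Fin 1 → (S3 →ₗ[ℂ] ℂ)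
  | 0 => lc 0 0 0

def Lam0 : S3 →ₗ[ℂ] (Fin 1 → ℂ) := LinearMap.pi L0

lemma hb0 : ∀ i, b0 i ∈ homogeneousSubmodule (Fin 3) ℂ 0 := by
  intro i
  fin_cases i <;> exact Xabc_mem _ _ _ _ (by norm_num)

lemma Lam0_vanish : ∀ p ∈ J0, Lam0 p = 0 := by
  refine Lam_vanish Lam0 ?_ ?_ ?_ <;>
    (intro u
     funext j
     simp only [Lam0, LinearMap.pi_apply, Pi.zero_apply]
     fin_cases j <;>
       norm_num [L0, g1, g2, g3, mul_add, coeff_mul_mono, LinearMap.sub_apply,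
         LinearMap.smul_apply, smul_eq_mul])

lemma Lam0_basis : ∀ i, Lam0 (b0 i) = Pi.single i 1 := by
  intro i
  funext j
  simp only [Lam0, LinearMap.pi_apply]
  fin_cases i <;> fin_cases j <;>
    (simp only [L0, b0, Xabc, LinearMap.sub_apply, LinearMap.smul_apply, smul_eq_mul,
      lc_apply, coeff_mexp_monomial, Pi.single_apply]
     norm_num [Fin.ext_iff])

lemma SP0 : ∀ p ∈ homogeneousSubmodule (Fin 3) ℂ 0,
    p ∈ JC ⊔ Submodule.span ℂ (Set.range b0) := by
  refine SP_of_mono 0 _ fun a b c habc => ?_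
  obtain rfl : a = 0 := by omega
  obtain rfl : b = 0 := by omega
  obtain rfl : c = 0 := by omega
  exact Submodule.mem_sup_right (Submodule.subset_span ⟨0, rfl⟩)

lemma MD0 : MD 0 = 1 :=
  key 0 1 b0 hb0 Lam0 Lam0_vanish (hsurj_of_basis b0 hb0 Lam0 Lam0_basis) SP0

----------------------------------------------------------------
-- k = 1
def b1 : Fin 3 → S3
  | 0 => X 0 ^ 1 * X 1 ^ 0 * X 2 ^ 0
  | 1 => X 0 ^ 0 * X 1 ^ 1 * X 2 ^ 0
  | 2 => X 0 ^ 0 * X 1 ^ 0 * X 2 ^ 1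

def L1 : Fin 3 → (S3 →ₗ[ℂ] ℂ)
  | 0 => lc 1 0 0
  | 1 => lc 0 1 0
  | 2 => lc 0 0 1

def Lam1 : S3 →ₗ[ℂ] (Fin 3 → ℂ) := LinearMap.pi L1

lemma hb1 : ∀ i, b1 i ∈ homogeneousSubmodule (Fin 3) ℂ 1 := by
  intro i
  fin_cases i <;> exact Xabc_mem _ _ _ _ (by norm_num)

lemma Lam1_vanish : ∀ p ∈ J0, Lam1 p = 0 := by
  refine Lam_vanish Lam1 ?_ ?_ ?_ <;>
    (intro u
     funext j
     simp only [Lam1, LinearMap.pi_apply, Pi.zero_apply]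
     fin_cases j <;>
       norm_num [L1, g1, g2, g3, mul_add, coeff_mul_mono, LinearMap.sub_apply,
         LinearMap.smul_apply, smul_eq_mul])

lemma Lam1_basis : ∀ i, Lam1 (b1 i) = Pi.single i 1 := by
  intro i
  funext j
  simp only [Lam1, LinearMap.pi_apply]
  fin_cases i <;> fin_cases j <;>
    (simp only [L1, b1, Xabc, LinearMap.sub_apply, LinearMap.smul_apply, smul_eq_mul,
      lc_apply, coeff_mexp_monomial, Pi.single_apply]
     norm_num [Fin.ext_iff])

lemma SP1 : ∀ p ∈ homogeneousSubmodule (Fin 3) ℂ 1,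
    p ∈ JC ⊔ Submodule.span ℂ (Set.range b1) := by
  refine SP_of_mono 1 _ fun a b c habc => ?_
  have spmem : ∀ i : Fin 3, b1 i ∈ JC ⊔ Submodule.span ℂ (Set.range b1) :=
    fun i => Submodule.mem_sup_right (Submodule.subset_span ⟨i, rfl⟩)
  have hA : a ≤ 1 := by omega
  have hB : b ≤ 1 := by omega
  interval_cases a <;> interval_cases b <;>
    [ (obtain rfl : c = 1 := by omega);
      (obtain rfl : c = 0 := by omega);
      (obtain rfl : c = 0 := by omega);
      (exact absurd habc (by omega))]
  · exact spmem 2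
  · exact spmem 1
  · exact spmem 0

lemma MD1 : MD 1 = 3 :=
  key 1 3 b1 hb1 Lam1 Lam1_vanish (hsurj_of_basis b1 hb1 Lam1 Lam1_basis) SP1

----------------------------------------------------------------
-- k = 2
def b2 : Fin 6 → S3
  | 0 => X 0 ^ 2 * X 1 ^ 0 * X 2 ^ 0
  | 1 => X 0 ^ 1 * X 1 ^ 1 * X 2 ^ 0
  | 2 => X 0 ^ 1 * X 1 ^ 0 * X 2 ^ 1
  | 3 => X 0 ^ 0 * X 1 ^ 2 * X 2 ^ 0
  | 4 => X 0 ^ 0 * X 1 ^ 1 * X 2 ^ 1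
  | 5 => X 0 ^ 0 * X 1 ^ 0 * X 2 ^ 2

def L2 : Fin 6 → (S3 →ₗ[ℂ] ℂ)
  | 0 => lc 2 0 0
  | 1 => lc 1 1 0
  | 2 => lc 1 0 1
  | 3 => lc 0 2 0
  | 4 => lc 0 1 1
  | 5 => lc 0 0 2

def Lam2 : S3 →ₗ[ℂ] (Fin 6 → ℂ) := LinearMap.pi L2

lemma hb2 : ∀ i, b2 i ∈ homogeneousSubmodule (Fin 3) ℂ 2 := by
  intro i
  fin_cases i <;> exact Xabc_mem _ _ _ _ (by norm_num)

lemma Lam2_vanish : ∀ p ∈ J0, Lam2 p = 0 := by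
  refine Lam_vanish Lam2 ?_ ?_ ?_ <;>
    (intro u
     funext j
     simp only [Lam2, LinearMap.pi_apply, Pi.zero_apply]
     fin_cases j <;>
       norm_num [L2, g1, g2, g3, mul_add, coeff_mul_mono, LinearMap.sub_apply,
         LinearMap.smul_apply, smul_eq_mul])

lemma Lam2_basis : ∀ i, Lam2 (b2 i) = Pi.single i 1 := by
  intro i
  funext j
  simp only [Lam2, LinearMap.pi_apply]
  fin_cases i <;> fin_cases j <;>
    (simp only [L2, b2, Xabc, LinearMap.sub_apply, LinearMap.smul_apply, smul_eq_mul,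
      lc_apply, coeff_mexp_monomial, Pi.single_apply]
     norm_num [Fin.ext_iff])

lemma SP2 : ∀ p ∈ homogeneousSubmodule (Fin 3) ℂ 2,
    p ∈ JC ⊔ Submodule.span ℂ (Set.range b2) := by
  refine SP_of_mono 2 _ fun a b c habc => ?_
  have spmem : ∀ i : Fin 6, b2 i ∈ JC ⊔ Submodule.span ℂ (Set.range b2) :=
    fun i => Submodule.mem_sup_right (Submodule.subset_span ⟨i, rfl⟩)
  have hA : a ≤ 2 := by omega
  have hB : b ≤ 2 := by omega
  interval_cases a <;> interval_cases b <;>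
    [ (obtain rfl : c = 2 := by omega);
      (obtain rfl : c = 1 := by omega);
      (obtain rfl : c = 0 := by omega);
      (obtain rfl : c = 1 := by omega);
      (obtain rfl : c = 0 := by omega);
      (exact absurd habc (by omega));
      (obtain rfl : c = 0 := by omega);
      (exact absurd habc (by omega));
      (exact absurd habc (by omega))]
  · exact spmem 5
  · exact spmem 4
  · exact spmem 3
  · exact spmem 2
  · exact spmem 1
  · exact spmem 0

lemma MD2 : MD 2 = 6 :=
  key 2 6 b2 hb2 Lam2 Lam2_vanish (hsurj_of_basis b2 hb2 Lam2 Lam2_basis) SP2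

----------------------------------------------------------------
-- k = 4
def b4 : Fin 6 → S3
  | 0 => X 0 ^ 2 * X 1 ^ 1 * X 2 ^ 1
  | 1 => X 0 ^ 0 * X 1 ^ 4 * X 2 ^ 0
  | 2 => X 0 ^ 0 * X 1 ^ 3 * X 2 ^ 1
  | 3 => X 0 ^ 0 * X 1 ^ 2 * X 2 ^ 2
  | 4 => X 0 ^ 0 * X 1 ^ 1 * X 2 ^ 3
  | 5 => X 0 ^ 0 * X 1 ^ 0 * X 2 ^ 4

def L4 : Fin 6 → (S3 →ₗ[ℂ] ℂ)
  | 0 => lc 2 1 1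
  | 1 => lc 0 4 0 - (4 : ℂ)⁻¹ • lc 3 1 0
  | 2 => lc 0 3 1 - (4 : ℂ)⁻¹ • lc 3 0 1
  | 3 => lc 0 2 2
  | 4 => lc 0 1 3 - (4 : ℂ)⁻¹ • lc 3 1 0
  | 5 => lc 0 0 4 - (4 : ℂ)⁻¹ • lc 3 0 1

def Lam4 : S3 →ₗ[ℂ] (Fin 6 → ℂ) := LinearMap.pi L4

lemma hb4 : ∀ i, b4 i ∈ homogeneousSubmodule (Fin 3) ℂ 4 := by
  intro i
  fin_cases i <;> exact Xabc_mem _ _ _ _ (by norm_num)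

lemma Lam4_vanish : ∀ p ∈ J0, Lam4 p = 0 := by
  refine Lam_vanish Lam4 ?_ ?_ ?_ <;>
    (intro u
     funext j
     simp only [Lam4, LinearMap.pi_apply, Pi.zero_apply]
     fin_cases j <;>
       norm_num [L4, g1, g2, g3, mul_add, coeff_mul_mono, LinearMap.sub_apply,
         LinearMap.smul_apply, smul_eq_mul] <;> ring)

lemma Lam4_basis : ∀ i, Lam4 (b4 i) = Pi.single i 1 := by
  intro i
  funext j
  simp only [Lam4, LinearMap.pi_apply]
  fin_cases i <;> fin_cases j <;>
    (simp only [L4, b4, Xabc, LinearMap.sub_apply, LinearMap.smul_apply, smul_eq_mul,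
      lc_apply, coeff_mexp_monomial, Pi.single_apply]
     norm_num [Fin.ext_iff])

lemma SP4 : ∀ p ∈ homogeneousSubmodule (Fin 3) ℂ 4,
    p ∈ JC ⊔ Submodule.span ℂ (Set.range b4) := by
  refine SP_of_mono 4 _ fun a b c habc => ?_
  have spmem : ∀ i : Fin 6, b4 i ∈ JC ⊔ Submodule.span ℂ (Set.range b4) :=
    fun i => Submodule.mem_sup_right (Submodule.subset_span ⟨i, rfl⟩)
  have hA : a ≤ 4 := by omega
  have hB : b ≤ 4 := by omega
  interval_cases a <;> interval_cases b <;>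
    [ (obtain rfl : c = 4 := by omega);
      (obtain rfl : c = 3 := by omega);
      (obtain rfl : c = 2 := by omega);
      (obtain rfl : c = 1 := by omega);
      (obtain rfl : c = 0 := by omega);
      (obtain rfl : c = 3 := by omega);
      (obtain rfl : c = 2 := by omega);
      (obtain rfl : c = 1 := by omega);
      (obtain rfl : c = 0 := by omega);
      (exact absurd habc (by omega));
      (obtain rfl : c = 2 := by omega);
      (obtain rfl : c = 1 := by omega);
      (obtain rfl : c = 0 := by omega);
      (exact absurd habc (by omega));
      (exact absurd habc (by omega));
      (obtain rfl : c = 1 := by omega);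
      (obtain rfl : c = 0 := by omega);
      (exact absurd habc (by omega));
      (exact absurd habc (by omega));
      (exact absurd habc (by omega));
      (obtain rfl : c = 0 := by omega);
      (exact absurd habc (by omega));
      (exact absurd habc (by omega));
      (exact absurd habc (by omega));
      (exact absurd habc (by omega))]
  · exact spmem 5
  · exact spmem 4
  · exact spmem 3
  · exact spmem 2
  · exact spmem 1
  · exact Submodule.mem_sup_left (by simpa using memJ_z2 0 0 1)
  · exact Submodule.mem_sup_left (by simpa using memJ_z2 0 1 0)
  · exact Submodule.mem_sup_left (by simpa using memJ_y2 0 0 1)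
  · exact Submodule.mem_sup_left (by simpa using memJ_y2 0 1 0)
  · exact Submodule.mem_sup_left (by simpa using memJ_z2 1 0 0)
  · exact spmem 0
  · exact Submodule.mem_sup_left (by simpa using memJ_y2 1 0 0)
  · -- x³z
    refine smul_mem_cancel (4 : ℂ) (by norm_num) ?_
    have heq : (4 : ℂ) • ((X 0 : S3) ^ 3 * X 1 ^ 0 * X 2 ^ 1)
        = (X 2 : S3) * g1 - b4 2 - b4 5 := by
      rw [smul_eq_C_mul, map_ofNat, g1_X,
        show b4 2 = X 0 ^ 0 * X 1 ^ 3 * X 2 ^ 1 from rfl,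
        show b4 5 = X 0 ^ 0 * X 1 ^ 0 * X 2 ^ 4 from rfl]
      ring
    rw [heq]
    exact Submodule.sub_mem _ (Submodule.sub_mem _
      (Submodule.mem_sup_left (mul_g1_mem _)) (spmem 2)) (spmem 5)
  · -- x³y
    refine smul_mem_cancel (4 : ℂ) (by norm_num) ?_
    have heq : (4 : ℂ) • ((X 0 : S3) ^ 3 * X 1 ^ 1 * X 2 ^ 0)
        = (X 1 : S3) * g1 - b4 1 - b4 4 := by
      rw [smul_eq_C_mul, map_ofNat, g1_X,
        show b4 1 = X 0 ^ 0 * X 1 ^ 4 * X 2 ^ 0 from rfl,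
        show b4 4 = X 0 ^ 0 * X 1 ^ 1 * X 2 ^ 3 from rfl]
      ring
    rw [heq]
    exact Submodule.sub_mem _ (Submodule.sub_mem _
      (Submodule.mem_sup_left (mul_g1_mem _)) (spmem 1)) (spmem 4)
  · exact Submodule.mem_sup_left (by simpa using memJ_x4 0 0 0)

lemma MD4 : MD 4 = 6 :=
  key 4 6 b4 hb4 Lam4 Lam4_vanish (hsurj_of_basis b4 hb4 Lam4 Lam4_basis) SP4

----------------------------------------------------------------
-- k = 5
def b5 : Fin 4 → S3
  | 0 => X 0 ^ 0 * X 1 ^ 4 * X 2 ^ 1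
  | 1 => X 0 ^ 0 * X 1 ^ 2 * X 2 ^ 3
  | 2 => X 0 ^ 0 * X 1 ^ 1 * X 2 ^ 4
  | 3 => X 0 ^ 0 * X 1 ^ 0 * X 2 ^ 5

def L5 : Fin 4 → (S3 →ₗ[ℂ] ℂ)
  | 0 => lc 0 4 1 - (4 : ℂ)⁻¹ • lc 3 1 1
  | 1 => lc 0 2 3 - lc 0 5 0
  | 2 => lc 0 1 4 - (4 : ℂ)⁻¹ • lc 3 1 1
  | 3 => lc 0 0 5 - lc 0 3 2

def Lam5 : S3 →ₗ[ℂ] (Fin 4 → ℂ) := LinearMap.pi L5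

lemma hb5 : ∀ i, b5 i ∈ homogeneousSubmodule (Fin 3) ℂ 5 := by
  intro i
  fin_cases i <;> exact Xabc_mem _ _ _ _ (by norm_num)

lemma Lam5_vanish : ∀ p ∈ J0, Lam5 p = 0 := by
  refine Lam_vanish Lam5 ?_ ?_ ?_ <;>
    (intro u
     funext j
     simp only [Lam5, LinearMap.pi_apply, Pi.zero_apply]
     fin_cases j <;>
       norm_num [L5, g1, g2, g3, mul_add, coeff_mul_mono, LinearMap.sub_apply,
         LinearMap.smul_apply, smul_eq_mul] <;> ring)

lemma Lam5_basis : ∀ i, Lam5 (b5 i) = Pi.single i 1 := by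
  intro i
  funext j
  simp only [Lam5, LinearMap.pi_apply]
  fin_cases i <;> fin_cases j <;>
    (simp only [L5, b5, Xabc, LinearMap.sub_apply, LinearMap.smul_apply, smul_eq_mul,
      lc_apply, coeff_mexp_monomial, Pi.single_apply]
     norm_num [Fin.ext_iff])

lemma SP5 : ∀ p ∈ homogeneousSubmodule (Fin 3) ℂ 5,
    p ∈ JC ⊔ Submodule.span ℂ (Set.range b5) := by
  refine SP_of_mono 5 _ fun a b c habc => ?_
  have spmem : ∀ i : Fin 4, b5 i ∈ JC ⊔ Submodule.span ℂ (Set.range b5) :=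
    fun i => Submodule.mem_sup_right (Submodule.subset_span ⟨i, rfl⟩)
  have hA : a ≤ 5 := by omega
  have hB : b ≤ 5 := by omega
  interval_cases a <;> interval_cases b <;>
    [ (obtain rfl : c = 5 := by omega);
      (obtain rfl : c = 4 := by omega);
      (obtain rfl : c = 3 := by omega);
      (obtain rfl : c = 2 := by omega);
      (obtain rfl : c = 1 := by omega);
      (obtain rfl : c = 0 := by omega);
      (obtain rfl : c = 4 := by omega);
      (obtain rfl : c = 3 := by omega);
      (obtain rfl : c = 2 := by omega);
      (obtain rfl : c = 1 := by omega);
      (obtain rfl : c = 0 := by omega);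
      (exact absurd habc (by omega));
      (obtain rfl : c = 3 := by omega);
      (obtain rfl : c = 2 := by omega);
      (obtain rfl : c = 1 := by omega);
      (obtain rfl : c = 0 := by omega);
      (exact absurd habc (by omega));
      (exact absurd habc (by omega));
      (obtain rfl : c = 2 := by omega);
      (obtain rfl : c = 1 := by omega);
      (obtain rfl : c = 0 := by omega);
      (exact absurd habc (by omega));
      (exact absurd habc (by omega));
      (exact absurd habc (by omega));
      (obtain rfl : c = 1 := by omega);
      (obtain rfl : c = 0 := by omega);
      (exact absurd habc (by omega));
      (exact absurd habc (by omega));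
      (exact absurd habc (by omega));
      (exact absurd habc (by omega));
      (obtain rfl : c = 0 := by omega);
      (exact absurd habc (by omega));
      (exact absurd habc (by omega));
      (exact absurd habc (by omega));
      (exact absurd habc (by omega));
      (exact absurd habc (by omega))]
  · exact spmem 3
  · exact spmem 2
  · exact spmem 1
  · -- y³z²
    have heq : (X 0 : S3) ^ 0 * X 1 ^ 3 * X 2 ^ 2
        = ((X 1 : S3) ^ 3 * X 2 ^ 2 + X 2 ^ 5) - b5 3 := by
      rw [show b5 3 = X 0 ^ 0 * X 1 ^ 0 * X 2 ^ 5 from rfl]; ring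
    rw [heq]
    exact Submodule.sub_mem _ (Submodule.mem_sup_left memJ_h2) (spmem 3)
  · exact spmem 0
  · -- y⁵
    have heq : (X 0 : S3) ^ 0 * X 1 ^ 5 * X 2 ^ 0
        = ((X 1 : S3) ^ 5 + X 1 ^ 2 * X 2 ^ 3) - b5 1 := by
      rw [show b5 1 = X 0 ^ 0 * X 1 ^ 2 * X 2 ^ 3 from rfl]; ring
    rw [heq]
    exact Submodule.sub_mem _ (Submodule.mem_sup_left memJ_h1) (spmem 1)
  · exact Submodule.mem_sup_left (by simpa using memJ_z2 0 0 2)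
  · exact Submodule.mem_sup_left (by simpa using memJ_z2 0 1 1)
  · exact Submodule.mem_sup_left (by simpa using memJ_y2 0 0 2)
  · exact Submodule.mem_sup_left (by simpa using memJ_y2 0 1 1)
  · exact Submodule.mem_sup_left (by simpa using memJ_y2 0 2 0)
  · exact Submodule.mem_sup_left (by simpa using memJ_z2 1 0 1)
  · exact Submodule.mem_sup_left (by simpa using memJ_z2 1 1 0)
  · exact Submodule.mem_sup_left (by simpa using memJ_y2 1 0 1)
  · exact Submodule.mem_sup_left (by simpa using memJ_y2 1 1 0)
  · exact Submodule.mem_sup_left (by simpa using memJ_z2 2 0 0)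
  · -- x³yz
    refine smul_mem_cancel (4 : ℂ) (by norm_num) ?_
    have heq : (4 : ℂ) • ((X 0 : S3) ^ 3 * X 1 ^ 1 * X 2 ^ 1)
        = (X 1 * X 2 : S3) * g1 - b5 0 - b5 2 := by
      rw [smul_eq_C_mul, map_ofNat, g1_X,
        show b5 0 = X 0 ^ 0 * X 1 ^ 4 * X 2 ^ 1 from rfl,
        show b5 2 = X 0 ^ 0 * X 1 ^ 1 * X 2 ^ 4 from rfl]
      ring
    rw [heq]
    exact Submodule.sub_mem _ (Submodule.sub_mem _
      (Submodule.mem_sup_left (mul_g1_mem _)) (spmem 0)) (spmem 2)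
  · exact Submodule.mem_sup_left (by simpa using memJ_y2 2 0 0)
  · exact Submodule.mem_sup_left (by simpa using memJ_x4 0 0 1)
  · exact Submodule.mem_sup_left (by simpa using memJ_x4 0 1 0)
  · exact Submodule.mem_sup_left (by simpa using memJ_x4 1 0 0)

lemma MD5 : MD 5 = 4 :=
  key 5 4 b5 hb5 Lam5 Lam5_vanish (hsurj_of_basis b5 hb5 Lam5 Lam5_basis) SP5

end Finite

lemma pd0 : pderiv (0 : Fin 3) (X 0 * (X 0 ^ 3 + X 1 ^ 3 + X 2 ^ 3) : S3) = g1 := by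
  rw [g1_X]
  simp [pderiv_mul, pderiv_pow]
  ring

lemma pd1 : pderiv (1 : Fin 3) (X 0 * (X 0 ^ 3 + X 1 ^ 3 + X 2 ^ 3) : S3) = g2 := by
  rw [g2_X]
  simp [pderiv_mul, pderiv_pow]
  ring

lemma pd2 : pderiv (2 : Fin 3) (X 0 * (X 0 ^ 3 + X 1 ^ 3 + X 2 ^ 3) : S3) = g3 := by
  rw [g3_X]
  simp [pderiv_mul, pderiv_pow]
  ring

lemma smooth_poly : ((∑ i ∈ Finset.range 3, (Polynomial.X : Polynomial ℕ) ^ i)) ^ 3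
    = 1 + 3 * Polynomial.X + 6 * Polynomial.X ^ 2 + 7 * Polynomial.X ^ 3
      + 6 * Polynomial.X ^ 4 + 3 * Polynomial.X ^ 5 + Polynomial.X ^ 6 := by
  rw [Finset.sum_range_succ, Finset.sum_range_succ, Finset.sum_range_one]
  ring

lemma smooth_val (k : ℕ) (hk : k ≤ 5) :
    smoothMilnorDim 4 k = [1,3,6,7,6,3].getD k 0 := by
  rw [smoothMilnorDim, show (4 - 1 : ℕ) = 3 from rfl, smooth_poly]
  have h3 : (3 : Polynomial ℕ) = Polynomial.C 3 := by norm_num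
  have h6 : (6 : Polynomial ℕ) = Polynomial.C 6 := by norm_num
  have h7 : (7 : Polynomial ℕ) = Polynomial.C 7 := by norm_num
  rw [h3, h6, h7]
  interval_cases k <;>
    simp [Polynomial.coeff_add, Polynomial.coeff_C_mul, Polynomial.coeff_X_pow,
      Polynomial.coeff_one, Polynomial.coeff_X, Polynomial.coeff_C]

lemma milnorDim_eq (k : ℕ) :
    milnorDim (X 0 * (X 0 ^ 3 + X 1 ^ 3 + X 2 ^ 3)) k = MD k := by
  rw [milnorDim, pd0, pd1, pd2, MD]
  rfl


theorem stmt8 (f : MvPolynomial (Fin 3) ℂ)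
    (hf : f = X 0 * (X 0 ^ 3 + X 1 ^ 3 + X 2 ^ 3)) :
    milnorDim f 0 = 1 ∧ milnorDim f 1 = 3 ∧ milnorDim f 2 = 6 ∧ milnorDim f 3 = 7 ∧
    milnorDim f 4 = 6 ∧ milnorDim f 5 = 4 ∧ (∀ k, 6 ≤ k → milnorDim f k = 3) ∧
    -- `ct(C) = 4`
    IsGreatest {q : ℕ | ∀ k ≤ q, milnorDim f k = smoothMilnorDim 4 k} 4 ∧
    -- `st(C) = 6` (the total Tjurina number of `C` is `τ(C) = 3`)
    IsLeast {q : ℕ | ∀ k, q ≤ k → milnorDim f k = 3} 6 := by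
  subst hf
  have hM5 : milnorDim (X 0 * (X 0 ^ 3 + X 1 ^ 3 + X 2 ^ 3)) 5 = 4 := by
    rw [milnorDim_eq]; exact MD5
  refine ⟨by rw [milnorDim_eq]; exact MD0, by rw [milnorDim_eq]; exact MD1,
    by rw [milnorDim_eq]; exact MD2, by rw [milnorDim_eq]; exact MD3,
    by rw [milnorDim_eq]; exact MD4, hM5,
    fun k hk => by rw [milnorDim_eq]; exact MD_ge6 k hk, ⟨?_, ?_⟩, ⟨?_, ?_⟩⟩
  · -- membership for IsGreatest
    intro k hk
    interval_cases k <;>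
      rw [milnorDim_eq, smooth_val _ (by norm_num)] <;>
      simp only [List.getD] <;>
      first
        | (rw [MD0]; rfl) | (rw [MD1]; rfl) | (rw [MD2]; rfl) | (rw [MD3]; rfl)
        | (rw [MD4]; rfl)
  · -- upper bound
    intro q hq
    by_contra h
    have h5 : milnorDim (X 0 * (X 0 ^ 3 + X 1 ^ 3 + X 2 ^ 3)) 5 = smoothMilnorDim 4 5 :=
      hq 5 (by omega)
    rw [hM5, smooth_val 5 (by norm_num)] at h5
    norm_num at h5
  · -- membership for IsLeast
    intro k hk
    rw [milnorDim_eq]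
    exact MD_ge6 k hk
  · -- lower bound
    intro q hq
    by_contra h
    have h5 : milnorDim (X 0 * (X 0 ^ 3 + X 1 ^ 3 + X 2 ^ 3)) 5 = 3 := hq 5 (by omega)
    rw [hM5] at h5
    norm_num at h5

end Milnor8
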